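/- arXiv:2010.07175 — 4 statements merged into one kernel-verified Lean document; each statement's English description precedes it below -/
import Mathlib

section
/- Let R be a finite commutative ring, σ a ring automorphism of R, δ a unit in R, and n a positive integer. The polynomial x^n - δ lies in the center of the skew polynomial ring R[x; σ] if and only if σ(δ) = δ and the order of σ divides n. -/
/-- Multiplication in the skew polynomial ring `S[x;σ]`, where polynomials are
represented as finitely supported coefficient functions `ℕ →₀ S` and
`(a x^i) (b x^j) = a σ^i(b) x^{i+j}`. -/
noncomputable def skewMul {S : Type} [Ring S] (σ : RingAut S) (f g : ℕ →₀ S) : ℕ →₀ S :=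
  f.sum fun i a => g.sum fun j b => Finsupp.single (i + j) (a * (σ ^ i) b)

section aux
variable {S : Type} [Ring S] (σ : RingAut S)

lemma ringAut_one_apply (a : S) : (1 : RingAut S) a = a := rfl

lemma skewMul_single_left (i : ℕ) (a : S) (g : ℕ →₀ S) :
    skewMul σ (Finsupp.single i a) g = g.sum fun j b => Finsupp.single (i + j) (a * (σ ^ i) b) := by
  unfold skewMul
  apply Finsupp.sum_single_index
  simp

lemma skewMul_single_right (g : ℕ →₀ S) (j : ℕ) (b : S) :
    skewMul σ g (Finsupp.single j b) = g.sum fun i a => Finsupp.single (i + j) (a * (σ ^ i) b) := by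
  unfold skewMul
  apply Finsupp.sum_congr
  intro i _
  apply Finsupp.sum_single_index
  simp

lemma skewMul_sub_left (f f' g : ℕ →₀ S) :
    skewMul σ (f - f') g = skewMul σ f g - skewMul σ f' g := by
  unfold skewMul
  apply Finsupp.sum_sub_index
  intro i a₁ a₂
  simp [sub_mul, Finsupp.single_sub, Finsupp.sum_sub]

lemma skewMul_sub_right (g f f' : ℕ →₀ S) :
    skewMul σ g (f - f') = skewMul σ g f - skewMul σ g f' := by
  unfold skewMul
  rw [← Finsupp.sum_sub]
  apply Finsupp.sum_congr
  intro i _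
  apply Finsupp.sum_sub_index
  intro j b₁ b₂
  simp [mul_sub, Finsupp.single_sub]

end aux

theorem stmt7 (S : Type) [CommRing S] [Fintype S] (σ : RingAut S)
    (δ : S) (hδ : IsUnit δ) (n : ℕ) (hn : 0 < n) :
    (∀ g : ℕ →₀ S,
        skewMul σ (Finsupp.single n 1 - Finsupp.single 0 δ) g =
          skewMul σ g (Finsupp.single n 1 - Finsupp.single 0 δ)) ↔
      σ δ = δ ∧ orderOf σ ∣ n := by
  constructor
  · intro h
    constructor
    · have h1 := h (Finsupp.single 1 1)
      rw [skewMul_sub_left, skewMul_sub_right, skewMul_single_left,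
        skewMul_single_left, skewMul_single_right, skewMul_single_right] at h1
      have := DFunLike.congr_fun h1 1
      simp [Finsupp.sum_single_index, Finsupp.single_apply, hn.ne'] at this
      exact this.symm
    · rw [orderOf_dvd_iff_pow_eq_one]
      ext b
      have h1 := h (Finsupp.single 0 b)
      rw [skewMul_sub_left, skewMul_sub_right, skewMul_single_left,
        skewMul_single_left, skewMul_single_right, skewMul_single_right] at h1
      have := DFunLike.congr_fun h1 n
      simpa [Finsupp.sum_single_index, Finsupp.single_apply, hn.ne', hn.ne, ringAut_one_apply] using this
  · rintro ⟨hσδ, hord⟩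
    rw [orderOf_dvd_iff_pow_eq_one] at hord
    have hfix : ∀ i : ℕ, (σ ^ i) δ = δ := by
      intro i
      induction i with
      | zero => rfl
      | succ k ih => rw [pow_succ]; show (σ ^ k) (σ δ) = δ; rw [hσδ, ih]
    intro g
    rw [skewMul_sub_left, skewMul_sub_right, skewMul_single_left, skewMul_single_right,
      skewMul_single_left, skewMul_single_right]
    congr 1
    · apply Finsupp.sum_congr
      intro i _
      rw [hord, ringAut_one_apply]
      simp [add_comm]
    · apply Finsupp.sum_congr
      intro i _
      rw [hfix i]
      simp [ringAut_one_apply, mul_comm]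
end

section
/- Let C = η₀A₀ ⊕ η₁A₁ ⊕ η₂A₂ be a linear code of length n over R = F_{p^m}[v]/⟨v^3 - v⟩, where each A_i is an F_{p^m}-linear code. Then the Euclidean dual satisfies C^⊥ = η₀A₀^⊥ ⊕ η₁A₁^⊥ ⊕ η₂A₂^⊥. Moreover C ⊆ C^⊥ if and only if A_i ⊆ A_i^⊥ for all i = 0, 1, 2. -/
open Polynomial

set_option synthInstance.maxHeartbeats 1000000
set_option maxHeartbeats 1000000

noncomputable section

/-- The ring `R = F[v]/⟨v^3 - v⟩`. -/
abbrev Rq (F : Type) [Field F] : Type :=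
  Polynomial F ⧸ Ideal.span {(X : Polynomial F) ^ 3 - X}

/-- The image of `v` in `R`. -/
def vR (F : Type) [Field F] : Rq F := Ideal.Quotient.mk _ X

/-- The orthogonal idempotents `η₀ = 1 - v²`, `η₁ = ζ(v² + v)`, `η₂ = ζ(v² - v)`
with `ζ = 2⁻¹`. -/
def eta (F : Type) [Field F] : Fin 3 → Rq F :=
  ![1 - vR F ^ 2,
    algebraMap F (Rq F) (2 : F)⁻¹ * (vR F ^ 2 + vR F),
    algebraMap F (Rq F) (2 : F)⁻¹ * (vR F ^ 2 - vR F)]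

/-- The Euclidean dual of a code, with respect to the standard bilinear form. -/
def dualSet {ι S : Type} [Fintype ι] [CommRing S] (C : Set (ι → S)) : Set (ι → S) :=
  {a | ∀ b ∈ C, ∑ t, a t * b t = 0}


section AuxSection
variable (F : Type) [Field F]

example (a : F) : algebraMap F (Rq F) a = Ideal.Quotient.mk _ (C a) := rfl

def evh (c : F) (hc : c ^ 3 - c = 0) : Rq F →+* F :=
  Ideal.Quotient.lift _ (eval₂RingHom (RingHom.id F) c) (by
    intro a ha
    rw [Ideal.mem_span_singleton] at ha
    obtain ⟨q, rfl⟩ := ha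
    simp only [coe_eval₂RingHom, eval₂_mul, eval₂_sub, eval₂_pow, eval₂_X, hc, zero_mul])

lemma evh_v (c : F) (hc : c ^ 3 - c = 0) : evh F c hc (vR F) = c := by
  simp [evh, vR, Ideal.Quotient.lift_mk]

lemma evh_alg (c : F) (hc : c ^ 3 - c = 0) (a : F) :
    evh F c hc (algebraMap F (Rq F) a) = a := by
  show evh F c hc (Ideal.Quotient.mk _ (C a)) = a
  simp [evh, Ideal.Quotient.lift_mk]

def phi (x : Fin 3 → F) : Rq F := ∑ j, _root_.eta F j * algebraMap F (Rq F) (x j)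

lemma aux_hv : vR F ^ 3 = vR F := by
  have h : (Ideal.Quotient.mk (Ideal.span {(X : Polynomial F) ^ 3 - X}))
      ((X : Polynomial F) ^ 3 - X) = 0 :=
    Ideal.Quotient.eq_zero_iff_mem.mpr (Ideal.subset_span rfl)
  rw [map_sub, map_pow, sub_eq_zero] at h
  exact h

lemma aux_hz (h2 : (2 : F) ≠ 0) :
    algebraMap F (Rq F) (2 : F)⁻¹ * 2 = 1 := by
  have h : ((algebraMap F (Rq F)) (2 : F)) = 2 := map_ofNat _ 2
  rw [← h, ← map_mul, inv_mul_cancel₀ h2, map_one]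

lemma eta_mul (h2 : (2 : F) ≠ 0) (i j : Fin 3) :
    _root_.eta F i * _root_.eta F j = if i = j then _root_.eta F i else 0 := by
  have hv := aux_hv F
  have hz := aux_hz F h2
  set z := algebraMap F (Rq F) (2 : F)⁻¹ with hzdef
  set v := vR F with hvdef
  fin_cases i <;> fin_cases j <;>
    simp only [_root_.eta, Matrix.cons_val_zero, Matrix.cons_val_one, Matrix.head_cons,
      Matrix.cons_val_two, Matrix.tail_cons, Fin.mk_zero, Fin.mk_one, Fin.isValue, Fin.reduceEq,
      show ((⟨2, by norm_num⟩ : Fin 3) = (2 : Fin 3)) from rfl, reduceIte,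
      Matrix.cons_val_fin_one]
  · linear_combination (v : Rq F) * hv
  · linear_combination (-(z*(v+1))) * hv
  · linear_combination (-(z*(v-1))) * hv
  · linear_combination (-(z*(v+1))) * hv
  · linear_combination (z^2*(v+2)) * hv + (z*(v^2+v)) * hz
  · linear_combination (z^2*v) * hv
  · linear_combination (-(z*(v-1))) * hv
  · linear_combination (z^2*v) * hv
  · linear_combination (z^2*(v-2)) * hv + (z*(v^2-v)) * hz

lemma eta_sum (h2 : (2 : F) ≠ 0) : ∑ j, _root_.eta F j = 1 := by
  have hz := aux_hz F h2
  simp only [Fin.sum_univ_three, _root_.eta, Matrix.cons_val_zero, Matrix.cons_val_one,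
    Matrix.head_cons, Matrix.cons_val_two, Matrix.tail_cons]
  linear_combination (vR F ^ 2) * hz

lemma phi_mul (h2 : (2 : F) ≠ 0) (x y : Fin 3 → F) :
    phi F x * phi F y = phi F (fun j => x j * y j) := by
  have h00 : _root_.eta F 0 * _root_.eta F 0 = _root_.eta F 0 := by simpa using eta_mul F h2 0 0
  have h11 : _root_.eta F 1 * _root_.eta F 1 = _root_.eta F 1 := by simpa using eta_mul F h2 1 1
  have h22 : _root_.eta F 2 * _root_.eta F 2 = _root_.eta F 2 := by simpa using eta_mul F h2 2 2
  have h01 : _root_.eta F 0 * _root_.eta F 1 = 0 := by simpa using eta_mul F h2 0 1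
  have h02 : _root_.eta F 0 * _root_.eta F 2 = 0 := by simpa using eta_mul F h2 0 2
  have h10 : _root_.eta F 1 * _root_.eta F 0 = 0 := by simpa using eta_mul F h2 1 0
  have h12 : _root_.eta F 1 * _root_.eta F 2 = 0 := by simpa using eta_mul F h2 1 2
  have h20 : _root_.eta F 2 * _root_.eta F 0 = 0 := by simpa using eta_mul F h2 2 0
  have h21 : _root_.eta F 2 * _root_.eta F 1 = 0 := by simpa using eta_mul F h2 2 1
  simp only [phi, Fin.sum_univ_three, map_mul]
  set a0 := algebraMap F (Rq F) (x 0)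
  set a1 := algebraMap F (Rq F) (x 1)
  set a2 := algebraMap F (Rq F) (x 2)
  set b0 := algebraMap F (Rq F) (y 0)
  set b1 := algebraMap F (Rq F) (y 1)
  set b2 := algebraMap F (Rq F) (y 2)
  linear_combination (a0*b0) * h00 + (a0*b1) * h01 + (a0*b2) * h02 + (a1*b0) * h10 +
    (a1*b1) * h11 + (a1*b2) * h12 + (a2*b0) * h20 + (a2*b1) * h21 + (a2*b2) * h22

lemma phi_add (x y : Fin 3 → F) : phi F (x + y) = phi F x + phi F y := by
  simp [phi, map_add, mul_add, Finset.sum_add_distrib]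

lemma phi_sum {ι : Type} (s : Finset ι) (f : ι → Fin 3 → F) :
    phi F (fun j => ∑ t ∈ s, f t j) = ∑ t ∈ s, phi F (f t) := by
  simp only [phi, map_sum, Finset.mul_sum]
  exact Finset.sum_comm

lemma phi_zero : phi F (fun _ => 0) = 0 := by simp [phi]

lemma evh_phi (c : F) (hc : c ^ 3 - c = 0) (x : Fin 3 → F) :
    evh F c hc (phi F x) =
      x 0 * (1 - c ^ 2) + (2:F)⁻¹ * x 1 * (c ^ 2 + c) + (2:F)⁻¹ * x 2 * (c ^ 2 - c) := by
  simp only [phi, Fin.sum_univ_three, _root_.eta, Matrix.cons_val_zero, Matrix.cons_val_one,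
    Matrix.head_cons, Matrix.cons_val_two, Matrix.tail_cons, map_add, map_mul, map_sub,
    map_pow, map_one, evh_v, evh_alg]
  ring

lemma phi_inj (h2 : (2 : F) ≠ 0) : Function.Injective (phi F) := by
  intro x y h
  have e0 := congrArg (evh F 0 (by ring)) h
  have e1 := congrArg (evh F 1 (by ring)) h
  have e2 := congrArg (evh F (-1) (by ring)) h
  rw [evh_phi, evh_phi] at e0 e1 e2
  norm_num at e0 e1 e2
  funext i
  fin_cases i
  · exact e0
  · exact e1.resolve_right h2
  · exact e2.resolve_right h2

lemma phi_v (h2 : (2 : F) ≠ 0) : phi F ![0, 1, -1] = vR F := by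
  have hz := aux_hz F h2
  simp only [phi, Fin.sum_univ_three, _root_.eta, Matrix.cons_val_zero, Matrix.cons_val_one,
    Matrix.head_cons, Matrix.cons_val_two, Matrix.tail_cons, map_one, map_neg, mul_one,
    map_zero, mul_zero, mul_neg]
  linear_combination (vR F) * hz

lemma phi_surj (h2 : (2 : F) ≠ 0) : Function.Surjective (phi F) := by
  intro r
  obtain ⟨q, rfl⟩ := Ideal.Quotient.mk_surjective r
  induction q using Polynomial.induction_on with
  | C a =>
    refine ⟨fun _ => a, ?_⟩
    rw [show phi F (fun _ => a) = (∑ j, _root_.eta F j) * algebraMap F (Rq F) a by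
      simp [phi, Finset.sum_mul], eta_sum F h2, one_mul]
    rfl
  | add p q hp hq =>
    obtain ⟨a, ha⟩ := hp
    obtain ⟨b, hb⟩ := hq
    exact ⟨a + b, by rw [phi_add, ha, hb, map_add]⟩
  | monomial k a ih =>
    obtain ⟨b, hb⟩ := ih
    refine ⟨fun j => b j * ![0, 1, -1] j, ?_⟩
    have hstep : (Ideal.Quotient.mk (Ideal.span {(X : Polynomial F) ^ 3 - X}))
        (C a * X ^ (k + 1)) =
        (Ideal.Quotient.mk (Ideal.span {(X : Polynomial F) ^ 3 - X})) (C a * X ^ k) * vR F := by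
      rw [vR, ← map_mul]
      ring_nf
    rw [hstep, ← hb, ← phi_v F h2, phi_mul F h2]

lemma two_ne_zero_of_card (p m : ℕ) (hp : p.Prime) (hodd : Odd p) (hm : 0 < m)
    [Fintype F] (hF : Fintype.card F = p ^ m) : (2 : F) ≠ 0 := by
  intro h20
  have h1 : ringChar F ∣ 2 := ringChar.dvd (by exact_mod_cast h20)
  have hchar : ringChar F = 2 := by
    rcases (Nat.prime_two.eq_one_or_self_of_dvd _ h1) with h | h
    · exact absurd h (CharP.ringChar_ne_one)
    · exact h
  haveI : CharP F 2 := hchar ▸ ringChar.charP F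
  obtain ⟨k, _, hcard⟩ := FiniteField.card F 2
  rw [hF] at hcard
  have hpd : p ∣ 2 ^ (k : ℕ) := hcard ▸ dvd_pow_self p hm.ne'
  have hp2 : p = 2 := (Nat.prime_dvd_prime_iff_eq hp Nat.prime_two).mp
    (hp.dvd_of_dvd_pow hpd)
  rw [hp2] at hodd
  exact (Nat.not_odd_iff_even.mpr (by norm_num)) hodd


end AuxSection

theorem stmt9 (p m n : ℕ) (hp : p.Prime) (hodd : Odd p) (hm : 0 < m)
    (F : Type) [Field F] [Fintype F] (hF : Fintype.card F = p ^ m)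
    (A : Fin 3 → Submodule F (Fin n → F))
    (C : Submodule (Rq F) (Fin n → Rq F))
    (hC : ∀ c, c ∈ C ↔ ∃ y : Fin 3 → Fin n → F, (∀ i, y i ∈ A i) ∧
        c = fun t => ∑ j, eta F j * algebraMap F (Rq F) (y j t)) :
    (∀ c, c ∈ dualSet (C : Set (Fin n → Rq F)) ↔
        ∃ y : Fin 3 → Fin n → F, (∀ i, y i ∈ dualSet (A i : Set (Fin n → F))) ∧
          c = fun t => ∑ j, eta F j * algebraMap F (Rq F) (y j t)) ∧
      ((C : Set (Fin n → Rq F)) ⊆ dualSet (C : Set (Fin n → Rq F)) ↔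
        ∀ i, (A i : Set (Fin n → F)) ⊆ dualSet (A i : Set (Fin n → F))) := by
  have h2 : (2 : F) ≠ 0 := two_ne_zero_of_card F p m hp hodd hm hF
  -- the dot-product lemma
  have key : ∀ x w : Fin 3 → Fin n → F,
      ∑ t, phi F (fun j => x j t) * phi F (fun j => w j t) =
        phi F (fun j => ∑ t, x j t * w j t) := by
    intro x w
    simp only [phi_mul F h2]
    exact (phi_sum F Finset.univ fun t j => x j t * w j t).symm
  -- single-coordinate embedding
  have hsingle : ∀ (i : Fin 3) (a : Fin n → F), a ∈ A i →
      (fun t => ∑ j, _root_.eta F j *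
        algebraMap F (Rq F) ((fun j => if j = i then a else 0) j t)) ∈ C := by
    intro i a ha
    refine (hC _).mpr ⟨fun j => if j = i then a else 0, fun j => ?_, rfl⟩
    by_cases hji : j = i
    · simpa [hji] using ha
    · simp [hji]
  have part1 : ∀ c, c ∈ dualSet (C : Set (Fin n → Rq F)) ↔
      ∃ y : Fin 3 → Fin n → F, (∀ i, y i ∈ dualSet (A i : Set (Fin n → F))) ∧
        c = fun t => ∑ j, eta F j * algebraMap F (Rq F) (y j t) := by
    intro c
    constructor
    · intro hc
      choose x hx using fun t => phi_surj F h2 (c t)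
      refine ⟨fun j t => x t j, ?_, funext fun t => (hx t).symm⟩
      intro i b hb
      have hd := hc _ (hsingle i b hb)
      have hd' : phi F (fun j => ∑ t, x t j * (if j = i then b else 0) t) = 0 := by
        rw [← key (fun j t => x t j) (fun j => if j = i then b else 0)]
        calc ∑ t, phi F (fun j => x t j) * phi F (fun j => (if j = i then b else 0) t)
            = ∑ t, c t * (fun t => ∑ j, _root_.eta F j *
                algebraMap F (Rq F) ((fun j => if j = i then b else 0) j t)) t := by
              refine Finset.sum_congr rfl fun t _ => ?_
              rw [← hx t]
              rfl
          _ = 0 := hd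
      have h0 := phi_inj F h2 (a₂ := fun _ => 0) (by rw [hd', phi_zero])
      have h0i := congrFun h0 i
      simpa using h0i
    · rintro ⟨y, hy, rfl⟩
      intro b hb
      obtain ⟨w, hw, rfl⟩ := (hC b).mp hb
      show ∑ t, phi F (fun j => y j t) * phi F (fun j => w j t) = 0
      rw [key]
      rw [show (fun j => ∑ t, y j t * w j t) = (fun _ : Fin 3 => (0 : F)) from
        funext fun j => hy j (w j) (hw j), phi_zero]
  refine ⟨part1, ?_, ?_⟩
  · intro h i a ha b hb
    have hca := h (hsingle i a ha)
    have hd := hca _ (hsingle i b hb)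
    have hd' : phi F (fun j => ∑ t, (if j = i then a else 0) t *
        (if j = i then b else 0) t) = 0 := by
      rw [← key]
      exact hd
    have h0 := phi_inj F h2 (a₂ := fun _ => 0) (by rw [hd', phi_zero])
    have h0i := congrFun h0 i
    simpa using h0i
  · intro h c hcmem
    obtain ⟨y, hy, rfl⟩ := (hC c).mp hcmem
    exact (part1 _).mpr ⟨y, fun i => h i (hy i), rfl⟩
end
end

section
/- Let F be a finite field, Θ ∈ Aut(F), λ ∈ F* with Θ(λ) = λ, and n a positive integer divisible by the order of Θ. A linear code C of length n over F is skew (Θ, λ)-constacyclic if and only if, under the identification of F^n with F[x;Θ]/⟨x^n - λ⟩, C is a left ideal generated by a monic polynomial g(x) that is a right divisor of x^n - λ in F[x;Θ]. -/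
/-- A code `C` of length `n` over `S` is skew `(σ, δ)`-constacyclic if it is closed
under the shift `(c₀, …, c_{n-1}) ↦ (σ(δ c_{n-1}), σ(c₀), …, σ(c_{n-2}))`. -/
def IsSkewConstacyclic {S : Type} [CommRing S] {n : ℕ} [NeZero n]
    (σ : RingAut S) (δ : S) (C : Set (Fin n → S)) : Prop :=
  ∀ c ∈ C, (fun i : Fin n => σ ((if i = 0 then δ else 1) * c (i - 1))) ∈ C

/-- The polynomial (coefficient vector) associated to a codeword. -/
noncomputable def toPoly {S : Type} [Semiring S] {n : ℕ} (c : Fin n → S) : ℕ →₀ S :=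
  ∑ i : Fin n, Finsupp.single (i : ℕ) (c i)

/-- A polynomial is monic: it has a coefficient equal to `1` beyond which all
coefficients vanish. -/
def IsMonicPoly {S : Type} [Semiring S] (g : ℕ →₀ S) : Prop :=
  ∃ d, g d = 1 ∧ ∀ j, d < j → g j = 0

/-- The skew reciprocal polynomial `h*(x) = Σ_{j=0}^k Θ^j(h_{k-j}) x^j` of a
polynomial `h` of degree (at most) `k`. -/
noncomputable def skewRecip {S : Type} [Ring S] (Θ : RingAut S) (k : ℕ) (h : ℕ →₀ S) :
    ℕ →₀ S :=
  ∑ j ∈ Finset.range (k + 1), Finsupp.single j ((Θ ^ j) (h (k - j)))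

section SkewAlg
variable {S : Type} [CommRing S] (σ : RingAut S)

lemma skewMul_single_single (i j : ℕ) (a b : S) :
    skewMul σ (Finsupp.single i a) (Finsupp.single j b)
      = Finsupp.single (i + j) (a * (σ ^ i) b) := by
  unfold skewMul
  rw [Finsupp.sum_single_index (by simp), Finsupp.sum_single_index (by simp)]

lemma zero_skewMul (g : ℕ →₀ S) : skewMul σ 0 g = 0 := by
  unfold skewMul; exact Finsupp.sum_zero_index

lemma skewMul_zero (f : ℕ →₀ S) : skewMul σ f 0 = 0 := by
  unfold skewMul; simp

lemma add_skewMul (f₁ f₂ g : ℕ →₀ S) :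
    skewMul σ (f₁ + f₂) g = skewMul σ f₁ g + skewMul σ f₂ g := by
  unfold skewMul
  rw [Finsupp.sum_add_index' (by intro i; simp) (by intro i a₁ a₂; rw [← Finsupp.sum_add]; exact Finsupp.sum_congr fun j _ => by rw [add_mul, Finsupp.single_add])]

lemma skewMul_add (f g₁ g₂ : ℕ →₀ S) :
    skewMul σ f (g₁ + g₂) = skewMul σ f g₁ + skewMul σ f g₂ := by
  unfold skewMul
  rw [← Finsupp.sum_add]
  exact Finsupp.sum_congr fun i _ => by
    rw [Finsupp.sum_add_index' (by intro j; simp) (by intro j b₁ b₂; rw [map_add, mul_add, Finsupp.single_add])]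

lemma neg_skewMul (f g : ℕ →₀ S) : skewMul σ (-f) g = -skewMul σ f g := by
  have h := add_skewMul σ (-f) f g
  rw [neg_add_cancel, zero_skewMul] at h
  exact eq_neg_of_add_eq_zero_left h.symm

lemma skewMul_neg (f g : ℕ →₀ S) : skewMul σ f (-g) = -skewMul σ f g := by
  have h := skewMul_add σ f (-g) g
  rw [neg_add_cancel, skewMul_zero] at h
  exact eq_neg_of_add_eq_zero_left h.symm

lemma sub_skewMul (f₁ f₂ g : ℕ →₀ S) :
    skewMul σ (f₁ - f₂) g = skewMul σ f₁ g - skewMul σ f₂ g := by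
  rw [sub_eq_add_neg, add_skewMul, neg_skewMul, sub_eq_add_neg]

lemma skewMul_sub (f g₁ g₂ : ℕ →₀ S) :
    skewMul σ f (g₁ - g₂) = skewMul σ f g₁ - skewMul σ f g₂ := by
  rw [sub_eq_add_neg, skewMul_add, skewMul_neg, sub_eq_add_neg]

lemma skewMul_assoc (f g h : ℕ →₀ S) :
    skewMul σ (skewMul σ f g) h = skewMul σ f (skewMul σ g h) := by
  induction f using Finsupp.induction_linear with
  | zero => simp [zero_skewMul]
  | add f₁ f₂ h₁ h₂ => simp [add_skewMul, h₁, h₂]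
  | single i a =>
    induction g using Finsupp.induction_linear with
    | zero => simp [zero_skewMul, skewMul_zero]
    | add g₁ g₂ h₁ h₂ => simp [add_skewMul, skewMul_add, h₁, h₂]
    | single j b =>
      induction h using Finsupp.induction_linear with
      | zero => simp [skewMul_zero]
      | add h₁ h₂ ih₁ ih₂ => simp [skewMul_add, ih₁, ih₂]
      | single k c =>
        simp only [skewMul_single_single]
        have : ((σ ^ (i + j)) c) = (σ ^ i) ((σ ^ j) c) := by rw [pow_add]; rfl
        rw [this, add_assoc, map_mul, mul_assoc]

end SkewAlg

section Coeff
variable {S : Type} [CommRing S] (σ : RingAut S)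

lemma skewMul_single_apply (e : ℕ) (a : S) (g : ℕ →₀ S) (m : ℕ) :
    skewMul σ (Finsupp.single e a) g m = if e ≤ m then a * (σ ^ e) (g (m - e)) else 0 := by
  unfold skewMul
  rw [Finsupp.sum_single_index (by simp), Finsupp.sum_apply, Finsupp.sum]
  by_cases h : e ≤ m
  · rw [if_pos h, Finset.sum_eq_single (m - e)]
    · rw [Finsupp.single_apply, if_pos (by omega)]
    · intro j _ hne
      rw [Finsupp.single_apply, if_neg (by omega)]
    · intro hns
      rw [Finsupp.notMem_support_iff.mp hns]
      simp
  · rw [if_neg h]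
    apply Finset.sum_eq_zero
    intro j _
    rw [Finsupp.single_apply, if_neg (by omega)]

lemma single_zero_skewMul (u : S) (p : ℕ →₀ S) :
    skewMul σ (Finsupp.single 0 u) p = u • p := by
  ext m
  rw [skewMul_single_apply]
  simp only [Nat.zero_le, if_true, pow_zero, Nat.sub_zero, Finsupp.smul_apply, smul_eq_mul]
  rfl

lemma single_one_pow (e : ℕ) :
    Finsupp.single (e + 1) (1 : S) = skewMul σ (Finsupp.single 1 1) (Finsupp.single e (1:S)) := by
  rw [skewMul_single_single]; simp [add_comm]

lemma pow_fix {lam : S} (h : σ lam = lam) (k : ℕ) : (σ ^ k) lam = lam := by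
  induction k with
  | zero => rfl
  | succ k ih =>
    rw [pow_succ]
    show (σ ^ k) (σ lam) = lam
    rw [h, ih]

lemma toPoly_apply {n : ℕ} (c : Fin n → S) (m : ℕ) :
    toPoly c m = if h : m < n then c ⟨m, h⟩ else 0 := by
  unfold toPoly
  rw [Finset.sum_apply']
  by_cases h : m < n
  · rw [dif_pos h, Finset.sum_eq_single (⟨m, h⟩ : Fin n)]
    · simp [Finsupp.single_apply]
    · intro i _ hne
      rw [Finsupp.single_apply, if_neg (fun hc => hne (Fin.ext hc))]
    · simp
  · rw [dif_neg h]
    apply Finset.sum_eq_zero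
    intro i _
    rw [Finsupp.single_apply, if_neg (by omega)]

lemma toPoly_zero {n : ℕ} : toPoly (0 : Fin n → S) = 0 := by simp [toPoly]

lemma toPoly_add {n : ℕ} (c d : Fin n → S) : toPoly (c + d) = toPoly c + toPoly d := by
  simp [toPoly, Finsupp.single_add, Finset.sum_add_distrib]

noncomputable def redv {S : Type} [CommRing S] (lam : S) (n : ℕ) (p : ℕ →₀ S) : Fin n → S :=
  fun i => p.sum fun m a => if m % n = (i : ℕ) then lam ^ (m / n) * a else 0

variable (lam : S) (n : ℕ)

lemma redv_zero : redv lam n (0 : ℕ →₀ S) = 0 := by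
  funext i; simp [redv]

lemma redv_add (p q : ℕ →₀ S) : redv lam n (p + q) = redv lam n p + redv lam n q := by
  funext i
  simp only [redv, Pi.add_apply]
  rw [Finsupp.sum_add_index' (by intro m; split <;> simp) (by intro m a b; split <;> simp [mul_add])]

lemma redv_neg (p : ℕ →₀ S) : redv lam n (-p) = - redv lam n p := by
  have h := redv_add lam n (-p) p
  rw [neg_add_cancel, redv_zero] at h
  exact eq_neg_of_add_eq_zero_left h.symm

lemma redv_sub (p q : ℕ →₀ S) : redv lam n (p - q) = redv lam n p - redv lam n q := by
  rw [sub_eq_add_neg, redv_add, redv_neg, sub_eq_add_neg]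

lemma redv_single (m : ℕ) (a : S) :
    redv lam n (Finsupp.single m a)
      = fun i : Fin n => if m % n = (i : ℕ) then lam ^ (m / n) * a else 0 := by
  funext i
  simp only [redv]
  rw [Finsupp.sum_single_index (by split <;> simp)]

lemma redv_smul (u : S) (p : ℕ →₀ S) : redv lam n (u • p) = u • redv lam n p := by
  induction p using Finsupp.induction_linear with
  | zero => simp [redv_zero]
  | add p q hp hq => rw [smul_add, redv_add, hp, hq, redv_add, smul_add]
  | single m a =>
    rw [Finsupp.smul_single, redv_single, redv_single]
    funext i
    simp only [Pi.smul_apply, smul_eq_mul]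
    split <;> ring

lemma redv_finsetSum {ι : Type} (s : Finset ι) (f : ι → (ℕ →₀ S)) :
    redv lam n (∑ x ∈ s, f x) = ∑ x ∈ s, redv lam n (f x) := by
  classical
  induction s using Finset.induction_on with
  | empty => simp [redv_zero]
  | insert _ _ hx ih => rw [Finset.sum_insert hx, Finset.sum_insert hx, redv_add, ih]

lemma redv_toPoly {n : ℕ} [NeZero n] (c : Fin n → S) : redv lam n (toPoly c) = c := by
  unfold toPoly
  rw [redv_finsetSum]
  funext j
  rw [Finset.sum_apply]
  rw [Finset.sum_eq_single j]
  · rw [redv_single]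
    simp [Nat.mod_eq_of_lt j.isLt, Nat.div_eq_of_lt j.isLt]
  · intro i _ hne
    rw [redv_single]
    simp only [Nat.mod_eq_of_lt i.isLt, Nat.div_eq_of_lt i.isLt]
    rw [if_neg (fun hc => hne (Fin.ext hc))]
  · simp

lemma toPoly_single_cond {n : ℕ} [NeZero n] (k : ℕ) (hk : k < n) (A : S) :
    toPoly (fun i : Fin n => if k = (i : ℕ) then A else 0) = Finsupp.single k A := by
  ext m
  rw [toPoly_apply, Finsupp.single_apply]
  by_cases h : m < n
  · rw [dif_pos h]
  · rw [dif_neg h, if_neg (by omega)]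

end Coeff

section Shift
variable {S : Type} [CommRing S] (σ : RingAut S) (lam : S) (n : ℕ) [NeZero n]

lemma redv_single_apply (m : ℕ) (a : S) (i : Fin n) :
    redv lam n (Finsupp.single m a) i
      = if m % n = (i : ℕ) then lam ^ (m / n) * a else 0 :=
  congrFun (redv_single lam n m a) i

lemma fin_sub_one_val (j : Fin n) :
    ((j - 1 : Fin n) : ℕ) = if (j : ℕ) = 0 then n - 1 else (j : ℕ) - 1 := by
  have npos : 0 < n := Nat.pos_of_ne_zero (NeZero.ne n)
  have hj : (j : ℕ) < n := j.isLt
  have hv : ((j - 1 : Fin n) : ℕ) = ((n - ((1 : Fin n) : ℕ)) + (j : ℕ)) % n := by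
    rw [Fin.sub_def]
  rw [hv, Fin.val_one']
  rcases Nat.lt_or_ge n 2 with h2 | h2
  · have hn1 : n = 1 := by omega
    subst hn1
    have hz : (j : ℕ) = 0 := by omega
    simp [hz]
  · have h1 : 1 % n = 1 := Nat.mod_eq_of_lt (by omega)
    rw [h1]
    by_cases hz : (j : ℕ) = 0
    · rw [if_pos hz, hz, Nat.add_zero]
      exact Nat.mod_eq_of_lt (by omega)
    · rw [if_neg hz]
      have he : n - 1 + (j : ℕ) = ((j : ℕ) - 1) + n := by omega
      rw [he, Nat.add_mod_right]
      exact Nat.mod_eq_of_lt (by omega)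

lemma redv_shift (hfix : σ lam = lam) (p : ℕ →₀ S) :
    redv lam n (skewMul σ (Finsupp.single 1 1) p)
      = fun i : Fin n => σ ((if i = 0 then lam else 1) * (redv lam n p (i - 1))) := by
  have npos : 0 < n := Nat.pos_of_ne_zero (NeZero.ne n)
  induction p using Finsupp.induction_linear with
  | zero => funext i; simp [skewMul_zero, redv_zero]
  | add p q hp hq =>
    rw [skewMul_add, redv_add, hp, hq]
    funext i
    simp only [Pi.add_apply, redv_add]
    rw [mul_add, map_add]
  | single m a =>
    rw [skewMul_single_single, one_mul, pow_one]
    funext i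
    rw [redv_single_apply, redv_single_apply, fin_sub_one_val]
    have hm := Nat.div_add_mod m n
    set q := m / n with hq
    set r := m % n with hr
    have hrn : r < n := Nat.mod_lt _ npos
    have hin : (i : ℕ) < n := i.isLt
    by_cases hi : i = 0
    · have hi0 : (i : ℕ) = 0 := by rw [hi]; exact Fin.val_zero n
      rw [if_pos hi, if_pos hi0]
      by_cases hc : r + 1 = n
      · have h1m : 1 + m = n * (q + 1) := by rw [Nat.mul_add, Nat.mul_one]; omega
        have h1 : (1 + m) % n = 0 := by rw [h1m]; exact Nat.mul_mod_right n (q + 1)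
        have h2 : (1 + m) / n = q + 1 := by rw [h1m]; exact Nat.mul_div_cancel_left _ npos
        rw [h1, h2, if_pos hi0.symm, if_pos (by omega : r = n - 1)]
        rw [map_mul, map_mul, map_pow, hfix, pow_succ]
        ring
      · have h1m : 1 + m = n * q + (r + 1) := by omega
        have h1 : (1 + m) % n = r + 1 := by
          rw [h1m, Nat.mul_add_mod]; exact Nat.mod_eq_of_lt (by omega)
        rw [h1, if_neg (by omega), if_neg (by omega : ¬ r = n - 1), mul_zero, map_zero]
    · have hi' : (i : ℕ) ≠ 0 := fun hc0 => hi (Fin.ext (by rw [hc0]; exact (Fin.val_zero n).symm))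
      rw [if_neg hi, if_neg hi', one_mul]
      by_cases hc : r + 1 = n
      · have h1m : 1 + m = n * (q + 1) := by rw [Nat.mul_add, Nat.mul_one]; omega
        have h1 : (1 + m) % n = 0 := by rw [h1m]; exact Nat.mul_mod_right n (q + 1)
        rw [h1, if_neg (by omega), if_neg (by omega : ¬ r = (i : ℕ) - 1), map_zero]
      · have h1m : 1 + m = n * q + (r + 1) := by omega
        have h1 : (1 + m) % n = r + 1 := by
          rw [h1m, Nat.mul_add_mod]; exact Nat.mod_eq_of_lt (by omega)
        have h2 : (1 + m) / n = q := by
          rw [h1m, Nat.mul_add_div npos, Nat.div_eq_of_lt (by omega), Nat.add_zero]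
        rw [h1, h2]
        by_cases hri : r + 1 = (i : ℕ)
        · rw [if_pos hri, if_pos (by omega : r = (i : ℕ) - 1), map_mul, map_pow, hfix]
        · rw [if_neg hri, if_neg (by omega : ¬ r = (i : ℕ) - 1), map_zero]

end Shift

section Redsub
variable {S : Type} [CommRing S] (σ : RingAut S) (lam : S) (n : ℕ) [NeZero n]

lemma toPoly_redv_single (m : ℕ) (a : S) :
    toPoly (redv lam n (Finsupp.single m a)) = Finsupp.single (m % n) (lam ^ (m / n) * a) := by
  have npos : 0 < n := Nat.pos_of_ne_zero (NeZero.ne n)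
  rw [redv_single]
  exact toPoly_single_cond (m % n) (Nat.mod_lt _ npos) _

lemma redsub (hfix : σ lam = lam) (p : ℕ →₀ S) :
    ∃ r, p = toPoly (redv lam n p)
      + skewMul σ r (Finsupp.single n 1 - Finsupp.single 0 lam) := by
  have npos : 0 < n := Nat.pos_of_ne_zero (NeZero.ne n)
  induction p using Finsupp.induction_linear with
  | zero => exact ⟨0, by rw [redv_zero, toPoly_zero, zero_skewMul, add_zero]⟩
  | add p q hp hq =>
    obtain ⟨r₁, h₁⟩ := hp
    obtain ⟨r₂, h₂⟩ := hq
    refine ⟨r₁ + r₂, ?_⟩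
    rw [redv_add, toPoly_add, add_skewMul]
    conv_lhs => rw [h₁, h₂]
    abel
  | single m a =>
    induction m using Nat.strong_induction_on generalizing a with
    | _ m IH =>
      by_cases h : m < n
      · refine ⟨0, ?_⟩
        rw [toPoly_redv_single, Nat.mod_eq_of_lt h, Nat.div_eq_of_lt h, pow_zero, one_mul,
          zero_skewMul, add_zero]
      · push_neg at h
        obtain ⟨r', hr'⟩ := IH (m - n) (by omega) (lam * a)
        have key : skewMul σ (Finsupp.single (m - n) a)
              (Finsupp.single n 1 - Finsupp.single 0 lam)
            = Finsupp.single m a - Finsupp.single (m - n) (lam * a) := by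
          rw [skewMul_sub, skewMul_single_single, skewMul_single_single, map_one, mul_one,
            Nat.sub_add_cancel h, Nat.add_zero, pow_fix σ hfix, mul_comm a lam]
        have redeq : toPoly (redv lam n (Finsupp.single m a))
            = toPoly (redv lam n (Finsupp.single (m - n) (lam * a))) := by
          rw [toPoly_redv_single, toPoly_redv_single]
          have e1 : (m - n) % n = m % n := (Nat.mod_eq_sub_mod h).symm
          have e2 : m / n = (m - n) / n + 1 := Nat.div_eq_sub_div npos h
          rw [e1, e2, pow_succ, mul_assoc]
        set T := toPoly (redv lam n (Finsupp.single (m - n) (lam * a))) with hT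
        refine ⟨Finsupp.single (m - n) a + r', ?_⟩
        rw [add_skewMul, key, redeq, hr']
        abel

end Redsub

theorem stmt11 (F : Type) [Field F] [Fintype F] (n : ℕ) [NeZero n]
    (Θ : RingAut F) (lam : F) (hlam : lam ≠ 0) (hfix : Θ lam = lam)
    (hord : orderOf Θ ∣ n) (C : Submodule F (Fin n → F)) :
    IsSkewConstacyclic Θ lam (C : Set (Fin n → F)) ↔
      ∃ g : ℕ →₀ F, IsMonicPoly g ∧
        (∃ h, skewMul Θ h g = Finsupp.single n 1 - Finsupp.single 0 lam) ∧
        (∀ c : Fin n → F, c ∈ C ↔ ∃ q, toPoly c = skewMul Θ q g) := by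
  classical
  have npos : 0 < n := Nat.pos_of_ne_zero (NeZero.ne n)
  constructor
  · intro hC
    have hI0 : redv lam n (0 : ℕ →₀ F) ∈ C := by rw [redv_zero]; exact C.zero_mem
    have hIx : ∀ p : ℕ →₀ F, redv lam n p ∈ C →
        redv lam n (skewMul Θ (Finsupp.single 1 1) p) ∈ C := by
      intro p hp
      rw [redv_shift Θ lam n hfix]
      exact hC _ hp
    have hIsmul : ∀ (u : F) (p : ℕ →₀ F), redv lam n p ∈ C →
        redv lam n (skewMul Θ (Finsupp.single 0 u) p) ∈ C := by
      intro u p hp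
      rw [single_zero_skewMul, redv_smul]
      exact C.smul_mem u hp
    have hIpow : ∀ (e : ℕ) (p : ℕ →₀ F), redv lam n p ∈ C →
        redv lam n (skewMul Θ (Finsupp.single e (1 : F)) p) ∈ C := by
      intro e
      induction e with
      | zero => intro p hp; exact hIsmul 1 p hp
      | succ e ih =>
        intro p hp
        rw [single_one_pow, skewMul_assoc]
        exact hIx _ (ih _ hp)
    have hImul : ∀ (q p : ℕ →₀ F), redv lam n p ∈ C → redv lam n (skewMul Θ q p) ∈ C := by
      intro q
      induction q using Finsupp.induction_linear with
      | zero => intro p hp; rw [zero_skewMul]; exact hI0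
      | add q₁ q₂ h₁ h₂ =>
        intro p hp
        rw [add_skewMul, redv_add]
        exact C.add_mem (h₁ p hp) (h₂ p hp)
      | single e c =>
        intro p hp
        have hdec : skewMul Θ (Finsupp.single e c) p
            = skewMul Θ (Finsupp.single 0 c) (skewMul Θ (Finsupp.single e (1:F)) p) := by
          rw [← skewMul_assoc, skewMul_single_single, map_one, mul_one, Nat.zero_add]
        rw [hdec]
        exact hIsmul _ _ (hIpow e p hp)
    have hxnl0 : redv lam n (Finsupp.single n (1:F) - Finsupp.single 0 lam) = 0 := by
      funext i
      rw [redv_sub]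
      rw [Pi.sub_apply, Pi.zero_apply, redv_single_apply, redv_single_apply,
        Nat.mod_self, Nat.div_self npos, Nat.zero_mod, Nat.zero_div, pow_zero, pow_one,
        mul_one, one_mul, sub_self]
    have hxnlI : redv lam n (Finsupp.single n (1:F) - Finsupp.single 0 lam) ∈ C := by
      rw [hxnl0]; exact C.zero_mem
    have hex : ∃ d : ℕ, ∃ g : ℕ →₀ F,
        redv lam n g ∈ C ∧ g d = 1 ∧ ∀ j, d < j → g j = 0 := by
      refine ⟨n, Finsupp.single n (1:F) - Finsupp.single 0 lam, hxnlI, ?_, ?_⟩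
      · rw [Finsupp.sub_apply, Finsupp.single_eq_same, Finsupp.single_apply,
          if_neg (by omega), sub_zero]
      · intro j hj
        rw [Finsupp.sub_apply, Finsupp.single_apply, if_neg (by omega),
          Finsupp.single_apply, if_neg (by omega), sub_zero]
    obtain ⟨g, hgC, hgd, hgtop⟩ := Nat.find_spec hex
    set d₀ := Nat.find hex with hd₀
    have div : ∀ (N : ℕ) (p : ℕ →₀ F), redv lam n p ∈ C → (∀ j, N ≤ j → p j = 0) →
        ∃ q, p = skewMul Θ q g := by
      intro N
      induction N with
      | zero =>
        intro p hp h0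
        refine ⟨0, ?_⟩
        rw [zero_skewMul]
        ext j
        simpa using h0 j (Nat.zero_le j)
      | succ N ih =>
        intro p hp htop
        by_cases hpN : p N = 0
        · refine ih p hp ?_
          intro j hj
          rcases Nat.eq_or_lt_of_le hj with h | h
          · rw [← h]; exact hpN
          · exact htop j h
        · by_cases hNd : d₀ ≤ N
          · set e := N - d₀ with he
            set p' := p - skewMul Θ (Finsupp.single e (p N)) g with hp'
            have hp'C : redv lam n p' ∈ C := by
              rw [hp', redv_sub]
              exact C.sub_mem hp (hImul _ _ hgC)
            have hp'top : ∀ j, N ≤ j → p' j = 0 := by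
              intro j hj
              rw [hp', Finsupp.sub_apply, skewMul_single_apply]
              rcases Nat.eq_or_lt_of_le hj with hEq | hLt
              · rw [← hEq, if_pos (by omega : e ≤ N), show N - e = d₀ by omega, hgd,
                  map_one, mul_one, sub_self]
              · rw [htop j hLt]
                split_ifs with hle
                · rw [hgtop (j - e) (by omega), map_zero, mul_zero, sub_zero]
                · rw [sub_zero]
            obtain ⟨q', hq'⟩ := ih p' hp'C hp'top
            refine ⟨q' + Finsupp.single e (p N), ?_⟩
            rw [add_skewMul, ← hq', hp']
            abel
          · exfalso
            push_neg at hNd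
            apply Nat.find_min hex hNd
            refine ⟨skewMul Θ (Finsupp.single 0 (p N)⁻¹) p, hImul _ _ hp, ?_, ?_⟩
            · rw [single_zero_skewMul, Finsupp.smul_apply, smul_eq_mul,
                inv_mul_cancel₀ hpN]
            · intro j hj
              rw [single_zero_skewMul, Finsupp.smul_apply, smul_eq_mul,
                htop j (by omega), mul_zero]
    refine ⟨g, ⟨d₀, hgd, hgtop⟩, ?_, ?_⟩
    · obtain ⟨h, hh⟩ := div (n + 1) (Finsupp.single n (1:F) - Finsupp.single 0 lam) hxnlI
        (by
          intro j hj
          rw [Finsupp.sub_apply, Finsupp.single_apply, if_neg (by omega),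
            Finsupp.single_apply, if_neg (by omega), sub_zero])
      exact ⟨h, hh.symm⟩
    · intro c
      constructor
      · intro hc
        refine div n (toPoly c) ?_ ?_
        · rw [redv_toPoly]; exact hc
        · intro j hj
          rw [toPoly_apply, dif_neg (by omega)]
      · rintro ⟨q, hq⟩
        have hmem : redv lam n (toPoly c) ∈ C := by
          rw [hq]; exact hImul q g hgC
        rwa [redv_toPoly] at hmem
  · rintro ⟨g, hmon, ⟨h, hh⟩, hchar⟩
    intro c hc
    obtain ⟨q, hq⟩ := (hchar c).mp hc
    apply (hchar _).mpr
    have h1 : redv lam n (skewMul Θ (Finsupp.single 1 1) (toPoly c))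
        = fun i : Fin n => Θ ((if i = 0 then lam else 1) * c (i - 1)) := by
      rw [redv_shift Θ lam n hfix]
      funext i
      rw [redv_toPoly]
    obtain ⟨r, hr⟩ := redsub Θ lam n hfix (skewMul Θ (Finsupp.single 1 1) (toPoly c))
    rw [h1] at hr
    refine ⟨skewMul Θ (Finsupp.single 1 1) q - skewMul Θ r h, ?_⟩
    have h2 : toPoly (fun i : Fin n => Θ ((if i = 0 then lam else 1) * c (i - 1)))
        = skewMul Θ (Finsupp.single 1 1) (toPoly c)
          - skewMul Θ r (Finsupp.single n 1 - Finsupp.single 0 lam) := by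
      rw [hr]; abel
    rw [h2, hq, ← hh, sub_skewMul, skewMul_assoc, skewMul_assoc]
end

section
/- Let C be a skew (σ, δ)-constacyclic code of length n over a finite commutative ring S, where σ is an automorphism of S whose order divides n and δ is a unit of S fixed by σ. Then the Euclidean dual C^⊥ is a skew (σ, δ⁻¹)-constacyclic code over S. -/
theorem stmt14 (S : Type) [CommRing S] [Fintype S] (n : ℕ) [NeZero n]
    (σ : RingAut S) (hord : orderOf σ ∣ n) (δ : Sˣ) (hfix : σ δ = δ)
    (C : Submodule S (Fin n → S))
    (hC : IsSkewConstacyclic σ (δ : S) (C : Set (Fin n → S))) :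
    IsSkewConstacyclic σ ((δ⁻¹ : Sˣ) : S) (dualSet (C : Set (Fin n → S))) := by
  intro a ha b hb
  set T : (Fin n → S) → (Fin n → S) :=
    fun c (i : Fin n) => σ ((if i = 0 then (δ : S) else 1) * c (i - 1)) with hT
  have hmaps : Set.MapsTo T (C : Set (Fin n → S)) (C : Set (Fin n → S)) :=
    fun c hc => hC c hc
  have hinj : Set.InjOn T (C : Set (Fin n → S)) := by
    intro x hx y hy h
    funext i
    have h2 := congrFun h (i + 1)
    simp only [hT] at h2
    have h3 := σ.injective h2
    have hi : (i + 1 : Fin n) - 1 = i := by simp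
    rw [hi] at h3
    by_cases h0 : (i + 1 : Fin n) = 0
    · simp only [if_pos h0] at h3
      exact (Units.mul_right_inj δ).mp h3
    · simp only [if_neg h0, one_mul] at h3
      exact h3
  obtain ⟨c, hc, hcb⟩ :=
    (((Set.toFinite _).injOn_iff_bijOn_of_mapsTo hmaps).mp hinj).surjOn hb
  have hunit : ((δ⁻¹ : Sˣ) : S) * (δ : S) = 1 := by exact_mod_cast δ.inv_mul
  calc ∑ t, σ ((if t = 0 then ((δ⁻¹ : Sˣ) : S) else 1) * a (t - 1)) * b t
      = ∑ t, σ (a (t - 1) * c (t - 1)) := by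
        rw [← hcb]
        refine Finset.sum_congr rfl fun t _ => ?_
        simp only [hT]
        rw [← map_mul]
        congr 1
        by_cases h0 : t = 0
        · rw [if_pos h0, if_pos h0]
          linear_combination a (t - 1) * c (t - 1) * hunit
        · rw [if_neg h0, if_neg h0, one_mul, one_mul]
    _ = σ (∑ t, a (t - 1) * c (t - 1)) := (map_sum σ _ _).symm
    _ = σ (∑ s, a s * c s) := by
        rw [Fintype.sum_equiv (Equiv.subRight (1 : Fin n))
          (fun t => a (t - 1) * c (t - 1)) (fun s => a s * c s) (fun t => rfl)]
    _ = 0 := by rw [ha c hc, map_zero]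
end
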